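/- If G is a group with a normal subgroup K such that the quotient group G/K is circularly orderable and K is left-orderable, then G is circularly orderable. -/

import Mathlib

set_option linter.unusedSectionVars false


/-- A left-invariant circular order on a group `G`: values `±1` on pairwise distinct triples,
`0` on degenerate triples, satisfying the cocycle condition and left-invariance. -/
def IsLeftCircularOrder {G : Type*} [Group G] (e : G → G → G → ℤ) : Prop :=
  (∀ a b c : G, a ≠ b → b ≠ c → a ≠ c → e a b c = 1 ∨ e a b c = -1) ∧
  (∀ a b c : G, a = b ∨ b = c ∨ a = c → e a b c = 0) ∧
  (∀ g₀ g₁ g₂ g₃ : G, e g₁ g₂ g₃ - e g₀ g₂ g₃ + e g₀ g₁ g₃ - e g₀ g₁ g₂ = 0) ∧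
  (∀ g a b c : G, a ≠ b → b ≠ c → a ≠ c → e (g * a) (g * b) (g * c) = e a b c)

/-- A group is circularly orderable if it admits a left-invariant circular order. -/
def CircularlyOrderable (G : Type*) [Group G] : Prop :=
  ∃ e : G → G → G → ℤ, IsLeftCircularOrder e

/-- A group `G` is left-orderable if there is a strict total order `<` on `G` such that
`g < h` implies `f*g < f*h` for all `f, g, h`. -/
def LeftOrderable (G : Type*) [Group G] : Prop :=
  ∃ r : G → G → Prop, IsStrictTotalOrder G r ∧ ∀ f g h : G, r g h → r (f * g) (f * h)

section Aux

variable {Q : Type*} [Group Q]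

theorem eQ_swap12 (eQ : Q → Q → Q → ℤ)
    (h0 : ∀ a b c : Q, a = b ∨ b = c ∨ a = c → eQ a b c = 0)
    (hc : ∀ g₀ g₁ g₂ g₃ : Q, eQ g₁ g₂ g₃ - eQ g₀ g₂ g₃ + eQ g₀ g₁ g₃ - eQ g₀ g₁ g₂ = 0)
    (a b c : Q) : eQ b a c = - eQ a b c := by
  have h1 := hc a b a c
  have h2 := h0 a a c (Or.inl rfl)
  have h3 := h0 a b a (Or.inr (Or.inr rfl))
  linarith

theorem eQ_swap23 (eQ : Q → Q → Q → ℤ)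
    (h0 : ∀ a b c : Q, a = b ∨ b = c ∨ a = c → eQ a b c = 0)
    (hc : ∀ g₀ g₁ g₂ g₃ : Q, eQ g₁ g₂ g₃ - eQ g₀ g₂ g₃ + eQ g₀ g₁ g₃ - eQ g₀ g₁ g₂ = 0)
    (a b c : Q) : eQ a c b = - eQ a b c := by
  have h1 := hc a b c b
  have h2 := h0 b c b (Or.inr (Or.inr rfl))
  have h3 := h0 a b b (Or.inr (Or.inl rfl))
  linarith

theorem eQ_mul (eQ : Q → Q → Q → ℤ)
    (h0 : ∀ a b c : Q, a = b ∨ b = c ∨ a = c → eQ a b c = 0)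
    (hinv : ∀ g a b c : Q, a ≠ b → b ≠ c → a ≠ c → eQ (g * a) (g * b) (g * c) = eQ a b c)
    (g a b c : Q) : eQ (g * a) (g * b) (g * c) = eQ a b c := by
  by_cases hab : a = b
  · subst hab
    rw [h0 _ _ _ (Or.inl rfl), h0 _ _ _ (Or.inl rfl)]
  by_cases hbc : b = c
  · subst hbc
    rw [h0 _ _ _ (Or.inr (Or.inl rfl)), h0 _ _ _ (Or.inr (Or.inl rfl))]
  by_cases hac : a = c
  · subst hac
    rw [h0 _ _ _ (Or.inr (Or.inr rfl)), h0 _ _ _ (Or.inr (Or.inr rfl))]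
  · exact hinv g a b c hab hbc hac

end Aux

section Construction

variable {G : Type*} [Group G] (K : Subgroup G) [K.Normal] (r : K → K → Prop)

open scoped Classical in
/-- Sign comparison of two elements of the same coset of `K`, via the order `r` on `K`. -/
noncomputable def Lfun (x y : G) : ℤ :=
  if h : ((x : G ⧸ K) = (y : G ⧸ K)) ∧ x ≠ y then
    (if r 1 ⟨x⁻¹ * y, QuotientGroup.eq.mp h.1⟩ then 1 else -1)
  else 0

theorem Lfun_eq_zero {x y : G} (h : ¬ ((x : G ⧸ K) = (y : G ⧸ K)) ∨ x = y) :
    Lfun K r x y = 0 := by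
  unfold Lfun
  rw [dif_neg]
  tauto

theorem Lfun_pm {x y : G} (h1 : (x : G ⧸ K) = (y : G ⧸ K)) (h2 : x ≠ y) :
    Lfun K r x y = 1 ∨ Lfun K r x y = -1 := by
  unfold Lfun
  rw [dif_pos ⟨h1, h2⟩]
  split_ifs <;> simp

theorem Lfun_antisymm (hSTO : IsStrictTotalOrder K r)
    (hrinv : ∀ f g h : K, r g h → r (f * g) (f * h)) (x y : G) :
    Lfun K r x y = - Lfun K r y x := by
  by_cases h : ((x : G ⧸ K) = (y : G ⧸ K)) ∧ x ≠ y
  · have h' : ((y : G ⧸ K) = (x : G ⧸ K)) ∧ y ≠ x := ⟨h.1.symm, h.2.symm⟩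
    unfold Lfun
    rw [dif_pos h, dif_pos h']
    have huv : (⟨y⁻¹ * x, QuotientGroup.eq.mp h'.1⟩ : K)
        = (⟨x⁻¹ * y, QuotientGroup.eq.mp h.1⟩ : K)⁻¹ := by
      apply Subtype.ext
      simp
    rw [huv]
    set u : K := ⟨x⁻¹ * y, QuotientGroup.eq.mp h.1⟩ with hu
    have hne : (1 : K) ≠ u := by
      intro hh
      apply h.2
      have : x⁻¹ * y = 1 := (congrArg Subtype.val hh).symm
      rwa [inv_mul_eq_one] at this
    rcases (show r 1 u ∨ 1 = u ∨ r u 1 by have := hSTO.trichotomous 1 u; tauto) with h1 | h1 | h1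
    · have h2 : ¬ r 1 u⁻¹ := by
        intro h2
        have h3 : r (u * 1) (u * u⁻¹) := hrinv u 1 u⁻¹ h2
        rw [mul_one, mul_inv_cancel] at h3
        exact hSTO.irrefl 1 (hSTO.trans 1 u 1 h1 h3)
      rw [if_pos h1, if_neg h2]
      norm_num
    · exact absurd h1 hne
    · have h2 : r 1 u⁻¹ := by
        have h3 : r (u⁻¹ * u) (u⁻¹ * 1) := hrinv u⁻¹ u 1 h1
        rwa [inv_mul_cancel, mul_one] at h3
      have h3 : ¬ r 1 u := by
        intro h3
        exact hSTO.irrefl 1 (hSTO.trans 1 u 1 h3 h1)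
      rw [if_neg h3, if_pos h2]
  · have h' : ¬ (((y : G ⧸ K) = (x : G ⧸ K)) ∧ y ≠ x) :=
      fun hh => h ⟨hh.1.symm, hh.2.symm⟩
    unfold Lfun
    rw [dif_neg h, dif_neg h']
    norm_num

theorem Lfun_mul (g x y : G) : Lfun K r (g * x) (g * y) = Lfun K r x y := by
  have hgr : ((g * x : G) : G ⧸ K) = ((g * y : G) : G ⧸ K) ↔ ((x : G ⧸ K) = (y : G ⧸ K)) := by
    rw [QuotientGroup.eq, QuotientGroup.eq, show (g * x)⁻¹ * (g * y) = x⁻¹ * y by group]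
  by_cases h : ((x : G ⧸ K) = (y : G ⧸ K)) ∧ x ≠ y
  · have h' : (((g * x : G) : G ⧸ K) = ((g * y : G) : G ⧸ K)) ∧ g * x ≠ g * y :=
      ⟨hgr.mpr h.1, by simpa using h.2⟩
    unfold Lfun
    rw [dif_pos h', dif_pos h]
    have he : (⟨(g * x)⁻¹ * (g * y), QuotientGroup.eq.mp h'.1⟩ : K)
        = (⟨x⁻¹ * y, QuotientGroup.eq.mp h.1⟩ : K) := by
      apply Subtype.ext
      show (g * x)⁻¹ * (g * y) = x⁻¹ * y
      group
    rw [he]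
  · unfold Lfun
    rw [dif_neg, dif_neg h]
    intro hh
    exact h ⟨hgr.mp hh.1, fun e => hh.2 (by rw [e])⟩

theorem Lfun_one {x y : G} (h : Lfun K r x y = 1) :
    ∃ hm : x⁻¹ * y ∈ K, r 1 ⟨x⁻¹ * y, hm⟩ := by
  unfold Lfun at h
  split_ifs at h with h1 h2
  · exact ⟨QuotientGroup.eq.mp h1.1, h2⟩
  · norm_num at h

theorem Lfun_cycle (hSTO : IsStrictTotalOrder K r)
    (hrinv : ∀ f g h : K, r g h → r (f * g) (f * h)) {x y z : G}
    (h1 : Lfun K r x y = 1) (h2 : Lfun K r y z = 1) (h3 : Lfun K r z x = 1) : False := by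
  obtain ⟨m1, hr1⟩ := Lfun_one K r h1
  obtain ⟨m2, hr2⟩ := Lfun_one K r h2
  obtain ⟨m3, hr3⟩ := Lfun_one K r h3
  set u : K := ⟨x⁻¹ * y, m1⟩
  set v : K := ⟨y⁻¹ * z, m2⟩
  set w : K := ⟨z⁻¹ * x, m3⟩
  have e1 : r u (u * v) := by simpa using hrinv u 1 v hr2
  have t1 : r 1 (u * v) := hSTO.trans 1 u (u * v) hr1 e1
  have e2 : r (u * v) (u * v * w) := by simpa using hrinv (u * v) 1 w hr3
  have huvw : u * v * w = 1 := by
    apply Subtype.ext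
    show x⁻¹ * y * (y⁻¹ * z) * (z⁻¹ * x) = 1
    group
  rw [huvw] at e2
  exact hSTO.irrefl 1 (hSTO.trans 1 (u * v) 1 t1 e2)

open scoped Classical in
/-- The lexicographic circular order on `G` built from a circular order on `G ⧸ K`
and a left order on `K`. -/
noncomputable def Efun (eQ : G ⧸ K → G ⧸ K → G ⧸ K → ℤ) (a b c : G) : ℤ :=
  if a = b ∨ b = c ∨ a = c then 0
  else eQ (a : G ⧸ K) (b : G ⧸ K) (c : G ⧸ K) + Lfun K r a b + Lfun K r b c + Lfun K r c a

theorem Efun_degen (eQ : G ⧸ K → G ⧸ K → G ⧸ K → ℤ) {a b c : G}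
    (h : a = b ∨ b = c ∨ a = c) : Efun K r eQ a b c = 0 := by
  unfold Efun
  rw [if_pos h]

theorem Efun_ne (eQ : G ⧸ K → G ⧸ K → G ⧸ K → ℤ) {a b c : G}
    (h : ¬ (a = b ∨ b = c ∨ a = c)) :
    Efun K r eQ a b c
      = eQ (a : G ⧸ K) (b : G ⧸ K) (c : G ⧸ K) + Lfun K r a b + Lfun K r b c + Lfun K r c a := by
  unfold Efun
  rw [if_neg h]

theorem Efun_swap23 (eQ : G ⧸ K → G ⧸ K → G ⧸ K → ℤ)
    (hSTO : IsStrictTotalOrder K r)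
    (hrinv : ∀ f g h : K, r g h → r (f * g) (f * h))
    (h0 : ∀ a b c : G ⧸ K, a = b ∨ b = c ∨ a = c → eQ a b c = 0)
    (hc : ∀ g₀ g₁ g₂ g₃ : G ⧸ K, eQ g₁ g₂ g₃ - eQ g₀ g₂ g₃ + eQ g₀ g₁ g₃ - eQ g₀ g₁ g₂ = 0)
    (a b c : G) : Efun K r eQ a c b = - Efun K r eQ a b c := by
  by_cases h : a = b ∨ b = c ∨ a = c
  · rw [Efun_degen K r eQ h, Efun_degen K r eQ
      (by rcases h with h | h | h
          exacts [Or.inr (Or.inr h), Or.inr (Or.inl h.symm), Or.inl h])]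
    norm_num
  · rw [Efun_ne K r eQ h, Efun_ne K r eQ
      (fun hh => h (by rcases hh with h1 | h1 | h1
                       exacts [Or.inr (Or.inr h1), Or.inr (Or.inl h1.symm), Or.inl h1]))]
    have e1 := eQ_swap23 eQ h0 hc (a : G ⧸ K) (b : G ⧸ K) (c : G ⧸ K)
    have l1 := Lfun_antisymm K r hSTO hrinv a c
    have l2 := Lfun_antisymm K r hSTO hrinv c b
    have l3 := Lfun_antisymm K r hSTO hrinv b a
    linarith

theorem Efun_swap12 (eQ : G ⧸ K → G ⧸ K → G ⧸ K → ℤ)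
    (hSTO : IsStrictTotalOrder K r)
    (hrinv : ∀ f g h : K, r g h → r (f * g) (f * h))
    (h0 : ∀ a b c : G ⧸ K, a = b ∨ b = c ∨ a = c → eQ a b c = 0)
    (hc : ∀ g₀ g₁ g₂ g₃ : G ⧸ K, eQ g₁ g₂ g₃ - eQ g₀ g₂ g₃ + eQ g₀ g₁ g₃ - eQ g₀ g₁ g₂ = 0)
    (a b c : G) : Efun K r eQ b a c = - Efun K r eQ a b c := by
  by_cases h : a = b ∨ b = c ∨ a = c
  · rw [Efun_degen K r eQ h, Efun_degen K r eQ
      (by rcases h with h | h | h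
          exacts [Or.inl h.symm, Or.inr (Or.inr h), Or.inr (Or.inl h)])]
    norm_num
  · rw [Efun_ne K r eQ h, Efun_ne K r eQ
      (fun hh => h (by rcases hh with h1 | h1 | h1
                       exacts [Or.inl h1.symm, Or.inr (Or.inr h1), Or.inr (Or.inl h1)]))]
    have e1 := eQ_swap12 eQ h0 hc (a : G ⧸ K) (b : G ⧸ K) (c : G ⧸ K)
    have l1 := Lfun_antisymm K r hSTO hrinv b a
    have l2 := Lfun_antisymm K r hSTO hrinv a c
    have l3 := Lfun_antisymm K r hSTO hrinv c b
    linarith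

theorem Efun_cyc (eQ : G ⧸ K → G ⧸ K → G ⧸ K → ℤ)
    (hSTO : IsStrictTotalOrder K r)
    (hrinv : ∀ f g h : K, r g h → r (f * g) (f * h))
    (h0 : ∀ a b c : G ⧸ K, a = b ∨ b = c ∨ a = c → eQ a b c = 0)
    (hc : ∀ g₀ g₁ g₂ g₃ : G ⧸ K, eQ g₁ g₂ g₃ - eQ g₀ g₂ g₃ + eQ g₀ g₁ g₃ - eQ g₀ g₁ g₂ = 0)
    (a b c : G) : Efun K r eQ b c a = Efun K r eQ a b c := by
  have e1 := Efun_swap23 K r eQ hSTO hrinv h0 hc b a c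
  have e2 := Efun_swap12 K r eQ hSTO hrinv h0 hc a b c
  linarith

end Construction

/-- If `K` is a normal subgroup of `G` with `G/K` circularly orderable and `K` left-orderable,
then `G` is circularly orderable. -/
theorem circularlyOrderable_of_extension (G : Type*) [Group G] (K : Subgroup G) [K.Normal]
    (hQ : CircularlyOrderable (G ⧸ K)) (hK : LeftOrderable K) : CircularlyOrderable G := by
  classical
  obtain ⟨eQ, hQ1, hQ0, hQc, hQinv⟩ := hQ
  obtain ⟨r, hSTO, hrinv⟩ := hK
  refine ⟨Efun K r eQ, ?_, ?_, ?_, ?_⟩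
  · -- values ±1 on pairwise distinct triples
    intro a b c hab hbc hac
    rw [Efun_ne K r eQ (by simp [hab, hbc, hac])]
    by_cases hab' : (a : G ⧸ K) = (b : G ⧸ K)
    · by_cases hbc' : (b : G ⧸ K) = (c : G ⧸ K)
      · -- all in the same coset
        have hca' : (c : G ⧸ K) = (a : G ⧸ K) := (hab'.trans hbc').symm
        have heQ : eQ (a : G ⧸ K) (b : G ⧸ K) (c : G ⧸ K) = 0 := hQ0 _ _ _ (Or.inl hab')
        have hx1 := Lfun_pm K r hab' hab
        have hx2 := Lfun_pm K r hbc' hbc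
        have hx3 := Lfun_pm K r hca' (Ne.symm hac)
        have hno1 : ¬ (Lfun K r a b = 1 ∧ Lfun K r b c = 1 ∧ Lfun K r c a = 1) := by
          rintro ⟨u, v, w⟩
          exact Lfun_cycle K r hSTO hrinv u v w
        have hno2 : ¬ (Lfun K r a b = -1 ∧ Lfun K r b c = -1 ∧ Lfun K r c a = -1) := by
          rintro ⟨u, v, w⟩
          have hba : Lfun K r b a = 1 := by
            have := Lfun_antisymm K r hSTO hrinv a b; linarith
          have hacx : Lfun K r a c = 1 := by
            have := Lfun_antisymm K r hSTO hrinv c a; linarith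
          have hcb : Lfun K r c b = 1 := by
            have := Lfun_antisymm K r hSTO hrinv b c; linarith
          exact Lfun_cycle K r hSTO hrinv hba hacx hcb
        rcases hx1 with h1 | h1 <;> rcases hx2 with h2 | h2 <;> rcases hx3 with h3 | h3
        · exact absurd ⟨h1, h2, h3⟩ hno1
        · left; rw [heQ, h1, h2, h3]; norm_num
        · left; rw [heQ, h1, h2, h3]; norm_num
        · right; rw [heQ, h1, h2, h3]; norm_num
        · left; rw [heQ, h1, h2, h3]; norm_num
        · right; rw [heQ, h1, h2, h3]; norm_num
        · right; rw [heQ, h1, h2, h3]; norm_num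
        · exact absurd ⟨h1, h2, h3⟩ hno2
      · -- a,b in same coset, c outside
        have hca' : ¬ ((c : G ⧸ K) = (a : G ⧸ K)) := fun h => hbc' (hab'.symm.trans h.symm)
        have heQ : eQ (a : G ⧸ K) (b : G ⧸ K) (c : G ⧸ K) = 0 := hQ0 _ _ _ (Or.inl hab')
        have l2 : Lfun K r b c = 0 := Lfun_eq_zero K r (Or.inl hbc')
        have l3 : Lfun K r c a = 0 := Lfun_eq_zero K r (Or.inl hca')
        rcases Lfun_pm K r hab' hab with h1 | h1
        · left; rw [heQ, h1, l2, l3]; norm_num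
        · right; rw [heQ, h1, l2, l3]; norm_num
    · by_cases hbc' : (b : G ⧸ K) = (c : G ⧸ K)
      · have hca' : ¬ ((c : G ⧸ K) = (a : G ⧸ K)) := fun h => hab' (h.symm.trans hbc'.symm)
        have heQ : eQ (a : G ⧸ K) (b : G ⧸ K) (c : G ⧸ K) = 0 := hQ0 _ _ _ (Or.inr (Or.inl hbc'))
        have l1 : Lfun K r a b = 0 := Lfun_eq_zero K r (Or.inl hab')
        have l3 : Lfun K r c a = 0 := Lfun_eq_zero K r (Or.inl hca')
        rcases Lfun_pm K r hbc' hbc with h2 | h2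
        · left; rw [heQ, l1, h2, l3]; norm_num
        · right; rw [heQ, l1, h2, l3]; norm_num
      · by_cases hca' : (c : G ⧸ K) = (a : G ⧸ K)
        · have heQ : eQ (a : G ⧸ K) (b : G ⧸ K) (c : G ⧸ K) = 0 :=
            hQ0 _ _ _ (Or.inr (Or.inr hca'.symm))
          have l1 : Lfun K r a b = 0 := Lfun_eq_zero K r (Or.inl hab')
          have l2 : Lfun K r b c = 0 := Lfun_eq_zero K r (Or.inl hbc')
          rcases Lfun_pm K r hca' (Ne.symm hac) with h3 | h3
          · left; rw [heQ, l1, l2, h3]; norm_num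
          · right; rw [heQ, l1, l2, h3]; norm_num
        · have l1 : Lfun K r a b = 0 := Lfun_eq_zero K r (Or.inl hab')
          have l2 : Lfun K r b c = 0 := Lfun_eq_zero K r (Or.inl hbc')
          have l3 : Lfun K r c a = 0 := Lfun_eq_zero K r (Or.inl hca')
          rcases hQ1 _ _ _ hab' hbc' (fun h => hca' h.symm) with h | h
          · left; rw [h, l1, l2, l3]; norm_num
          · right; rw [h, l1, l2, l3]; norm_num
  · -- zero on degenerate triples
    intro a b c h
    exact Efun_degen K r eQ h
  · -- cocycle
    intro g0 g1 g2 g3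
    by_cases h01 : g0 = g1
    · rw [h01, Efun_degen K r eQ (Or.inl rfl), Efun_degen K r eQ (Or.inl rfl)]
      ring
    by_cases h02 : g0 = g2
    · rw [h02]
      have e1 := Efun_degen K r eQ (a := g2) (b := g2) (c := g3) (Or.inl rfl)
      have e2 := Efun_degen K r eQ (a := g2) (b := g1) (c := g2) (Or.inr (Or.inr rfl))
      have e3 := Efun_swap12 K r eQ hSTO hrinv hQ0 hQc g1 g2 g3
      linarith
    by_cases h03 : g0 = g3
    · rw [h03]
      have e1 := Efun_degen K r eQ (a := g3) (b := g2) (c := g3) (Or.inr (Or.inr rfl))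
      have e2 := Efun_degen K r eQ (a := g3) (b := g1) (c := g3) (Or.inr (Or.inr rfl))
      have e3 := Efun_cyc K r eQ hSTO hrinv hQ0 hQc g3 g1 g2
      linarith
    by_cases h12 : g1 = g2
    · rw [h12]
      have e1 := Efun_degen K r eQ (a := g2) (b := g2) (c := g3) (Or.inl rfl)
      have e2 := Efun_degen K r eQ (a := g0) (b := g2) (c := g2) (Or.inr (Or.inl rfl))
      linarith
    by_cases h13 : g1 = g3
    · rw [h13]
      have e1 := Efun_degen K r eQ (a := g3) (b := g2) (c := g3) (Or.inr (Or.inr rfl))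
      have e2 := Efun_degen K r eQ (a := g0) (b := g3) (c := g3) (Or.inr (Or.inl rfl))
      have e3 := Efun_swap23 K r eQ hSTO hrinv hQ0 hQc g0 g2 g3
      linarith
    by_cases h23 : g2 = g3
    · rw [h23]
      have e1 := Efun_degen K r eQ (a := g1) (b := g3) (c := g3) (Or.inr (Or.inl rfl))
      have e2 := Efun_degen K r eQ (a := g0) (b := g3) (c := g3) (Or.inr (Or.inl rfl))
      linarith
    · -- pairwise distinct
      rw [Efun_ne K r eQ (by simp [h12, h23, h13]),
          Efun_ne K r eQ (by simp [h02, h23, h03]),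
          Efun_ne K r eQ (by simp [h01, h13, h03]),
          Efun_ne K r eQ (by simp [h01, h12, h02])]
      have hq := hQc (g0 : G ⧸ K) (g1 : G ⧸ K) (g2 : G ⧸ K) (g3 : G ⧸ K)
      have l1 := Lfun_antisymm K r hSTO hrinv g1 g3
      have l2 := Lfun_antisymm K r hSTO hrinv g0 g2
      linarith
  · -- left invariance
    intro g a b c hab hbc hac
    rw [Efun_ne K r eQ (by simp [hab, hbc, hac]), Efun_ne K r eQ (by simp [hab, hbc, hac])]
    have e1 : eQ ((g * a : G) : G ⧸ K) ((g * b : G) : G ⧸ K) ((g * c : G) : G ⧸ K)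
        = eQ (a : G ⧸ K) (b : G ⧸ K) (c : G ⧸ K) := by
      have := eQ_mul eQ hQ0 hQinv (g : G ⧸ K) (a : G ⧸ K) (b : G ⧸ K) (c : G ⧸ K)
      simpa [QuotientGroup.mk_mul] using this
    rw [e1, Lfun_mul, Lfun_mul, Lfun_mul]
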